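/- Let g(z) = a·z + b with a, b ∈ ℂ. Then V_g : F^∞_{ψ_m} → F^∞_{ψ_m} is a compact operator: if (f_j) is a sequence in F^∞_{ψ_m} with sup_j ‖f_j‖_{(m,∞)} < ∞ and f_j → 0 uniformly on compact subsets of ℂ, then ‖V_g f_j‖_{(m,∞)} → 0. -/

import Mathlib

open MeasureTheory

/-- The weight function ψ_m(z) = |z|²/2 − m·log(1+|z|). -/
noncomputable def psi (m : ℕ) (z : ℂ) : ℝ :=
  ‖z‖ ^ 2 / 2 - m * Real.log (1 + ‖z‖)

/-- Integral of F along the segment from 0 to z. -/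
noncomputable def lineInt (F : ℂ → ℂ) (z : ℂ) : ℂ :=
  (∫ t in (0:ℝ)..1, F (t * z)) * z

/-- The Volterra-type operator V_g f(z) = ∫₀^z f(w) g'(w) dw. -/
noncomputable def Vg (g f : ℂ → ℂ) : ℂ → ℂ :=
  lineInt fun w => f w * deriv g w

open Real Filter in
lemma aux_exp_psi_eq (m : ℕ) (z : ℂ) :
    Real.exp (psi m z) = Real.exp (‖z‖ ^ 2 / 2) / (1 + ‖z‖) ^ m := by
  have h : (0:ℝ) < 1 + ‖z‖ := by positivity
  rw [psi, Real.exp_sub, Real.exp_nat_mul, Real.exp_log h]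

lemma aux_weighted_le {x c ψ : ℝ} (h : x * Real.exp (-ψ) ≤ c) : x ≤ c * Real.exp ψ := by
  have := mul_le_mul_of_nonneg_right h (Real.exp_pos ψ).le
  rwa [mul_assoc, ← Real.exp_add, neg_add_cancel, Real.exp_zero, mul_one] at this

lemma aux_int_exp_seg {c : ℝ} (hc : 0 < c) :
    ∫ t in (0:ℝ)..1, Real.exp ((t - 1) * c) ≤ 2 / (2 * c) := by
  have hderiv : ∀ t ∈ Set.uIcc (0:ℝ) 1,
      HasDerivAt (fun t : ℝ => Real.exp ((t - 1) * c) / c) (Real.exp ((t - 1) * c)) t := by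
    intro t _
    have h1 : HasDerivAt (fun t : ℝ => (t - 1) * c) c t := by
      simpa using ((hasDerivAt_id t).sub_const 1).mul_const c
    have h2 := (h1.exp).div_const c
    simpa [mul_div_assoc, div_self hc.ne', mul_one] using h2
  have hint : IntervalIntegrable (fun t : ℝ => Real.exp ((t - 1) * c)) volume 0 1 :=
    (Real.continuous_exp.comp (by continuity)).intervalIntegrable 0 1
  rw [intervalIntegral.integral_eq_sub_of_hasDerivAt hderiv hint]
  have h2 : 2 / (2 * c) = 1 / c := by field_simp
  norm_num [h2]
  positivity

lemma aux_key_pt (m : ℕ) {t r : ℝ} (ht0 : 0 ≤ t) (ht1 : t ≤ 1) (hr : 0 ≤ r) :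
    Real.exp ((t*r)^2/2) / (1+t*r)^m ≤ Real.exp (r^2/2) / (1+r)^m *
      ((1+r)^m * Real.exp (-(3/8)*r^2) + 2^m * Real.exp ((t-1)*(r^2/2))) := by
  have h1r : (0:ℝ) < 1 + r := by positivity
  have h1tr : (0:ℝ) < 1 + t*r := by positivity
  have hpow : (0:ℝ) < (1+r)^m := by positivity
  have hpowt : (0:ℝ) < (1+t*r)^m := by positivity
  rcases le_or_gt t (1/2) with hc | hc
  · -- small t
    have hA : Real.exp ((t*r)^2/2) / (1+t*r)^m ≤ Real.exp (r^2/8) := by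
      have ht2 : t^2 ≤ 1/4 := by nlinarith
      have h1 : Real.exp ((t*r)^2/2) ≤ Real.exp (r^2/8) := by
        apply Real.exp_le_exp.2
        nlinarith [mul_le_mul_of_nonneg_right ht2 (sq_nonneg r)]
      have h2 : (1:ℝ) ≤ (1+t*r)^m := one_le_pow₀ (by nlinarith)
      calc Real.exp ((t*r)^2/2) / (1+t*r)^m ≤ Real.exp ((t*r)^2/2) :=
            div_le_self (Real.exp_pos _).le h2
        _ ≤ Real.exp (r^2/8) := h1
    have hB : Real.exp (r^2/2) / (1+r)^m * ((1+r)^m * Real.exp (-(3/8)*r^2)) = Real.exp (r^2/8) := by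
      have he : Real.exp (r^2/2) * Real.exp (-(3*r^2)/8) = Real.exp (r^2/8) := by
        rw [← Real.exp_add]; ring_nf
      field_simp
      have he' : Real.exp (-(r^2*3/8)) = Real.exp (-(3*r^2)/8) := by ring_nf
      linear_combination he + Real.exp (r^2/2) * he'
    have hC : 0 ≤ Real.exp (r^2/2) / (1+r)^m * (2^m * Real.exp ((t-1)*(r^2/2))) := by positivity
    calc Real.exp ((t*r)^2/2) / (1+t*r)^m ≤ Real.exp (r^2/8) := hA
      _ = Real.exp (r^2/2) / (1+r)^m * ((1+r)^m * Real.exp (-(3/8)*r^2)) := hB.symm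
      _ ≤ _ := by nlinarith [hC]
  · -- large t
    have hA : Real.exp ((t*r)^2/2) ≤ Real.exp (t*(r^2/2)) := by
      apply Real.exp_le_exp.2
      nlinarith [sq_nonneg r, mul_nonneg ht0 (sq_nonneg r)]
    have hB : (1+r)^m ≤ 2^m * (1+t*r)^m := by
      rw [← mul_pow]
      apply pow_le_pow_left₀ h1r.le
      nlinarith
    have key : Real.exp ((t*r)^2/2) / (1+t*r)^m ≤
        Real.exp (r^2/2) / (1+r)^m * (2^m * Real.exp ((t-1)*(r^2/2))) := by
      rw [div_mul_eq_mul_div, div_le_div_iff₀ hpowt hpow]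
      have hE : Real.exp (r^2/2) * (2^m * Real.exp ((t-1)*(r^2/2))) = 2^m * Real.exp (t*(r^2/2)) := by
        rw [mul_comm (Real.exp (r^2/2)), mul_assoc, ← Real.exp_add]
        ring_nf
      rw [hE]
      calc Real.exp ((t*r)^2/2) * (1+r)^m ≤ Real.exp (t*(r^2/2)) * (2^m * (1+t*r)^m) :=
            mul_le_mul hA hB (by positivity) (Real.exp_pos _).le
        _ = 2^m * Real.exp (t*(r^2/2)) * (1+t*r)^m := by ring
    have hC : 0 ≤ Real.exp (r^2/2) / (1+r)^m * ((1+r)^m * Real.exp (-(3/8)*r^2)) := by positivity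
    nlinarith [key, hC]

open Real Filter in
lemma aux_G_tendsto (m : ℕ) (C : ℝ) :
    Tendsto (fun r : ℝ => C * (r * (1+r)^m * Real.exp (-(3/8)*r^2) + 2^(m+1) / r))
      atTop (nhds 0) := by
  have h1 : Tendsto (fun r : ℝ => r * (1+r)^m * Real.exp (-(3/8)*r^2)) atTop (nhds 0) := by
    have hb := (tendsto_pow_mul_exp_neg_atTop_nhds_zero (m+1)).const_mul ((2:ℝ)^(m+1))
    rw [mul_zero] at hb
    apply squeeze_zero' ?_ ?_ hb
    · filter_upwards [eventually_ge_atTop (1:ℝ)] with r hr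
      positivity
    · filter_upwards [eventually_ge_atTop (3:ℝ)] with r hr
      have hr0 : (0:ℝ) ≤ r := by linarith
      have e1 : r * (1+r)^m ≤ 2^(m+1) * r^(m+1) := by
        calc r * (1+r)^m ≤ r * (2*r)^m :=
              mul_le_mul_of_nonneg_left (pow_le_pow_left₀ (by linarith) (by linarith) m) hr0
          _ = 2^m * r^(m+1) := by rw [mul_pow]; ring
          _ ≤ 2^(m+1) * r^(m+1) := by
              apply mul_le_mul_of_nonneg_right (pow_le_pow_right₀ one_le_two (Nat.le_succ m))
              positivity
      have e2 : Real.exp (-(3/8)*r^2) ≤ Real.exp (-r) := by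
        apply Real.exp_le_exp.2; nlinarith
      calc r * (1+r)^m * Real.exp (-(3/8)*r^2) ≤ (2^(m+1) * r^(m+1)) * Real.exp (-r) :=
            mul_le_mul e1 e2 (Real.exp_pos _).le (by positivity)
        _ = 2^(m+1) * (r^(m+1) * Real.exp (-r)) := by ring
  have h2 : Tendsto (fun r : ℝ => (2:ℝ)^(m+1) / r) atTop (nhds 0) :=
    tendsto_const_nhds.div_atTop tendsto_id
  have h3 := (h1.add h2).const_mul C
  simpa using h3

lemma aux_cont_exp_psi (m : ℕ) : Continuous fun w : ℂ => Real.exp (psi m w) := by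
  unfold psi
  apply Real.continuous_exp.comp
  apply Continuous.sub
  · exact (continuous_norm.pow 2).div_const 2
  · exact continuous_const.mul
      ((continuous_const.add continuous_norm).log
        (fun w => (by positivity : (0:ℝ) < 1 + ‖w‖).ne'))

/-- For g(z) = az+b, the operator V_g is compact on F^∞_{ψ_m}: any bounded sequence
converging to 0 uniformly on compacts has ‖V_g f_j‖_{(m,∞)} → 0. -/
theorem stmt_13 (m : ℕ) (a b : ℂ) (f : ℕ → ℂ → ℂ)
    (hdiff : ∀ j, Differentiable ℂ (f j)) (N : ℝ)
    (hbd : ∀ j z, ‖f j z‖ * Real.exp (-psi m z) ≤ N)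
    (hconv : ∀ K : Set ℂ, IsCompact K →
      TendstoUniformlyOn (fun j z => f j z) 0 Filter.atTop K) :
    ∀ ε > (0 : ℝ), ∃ J : ℕ, ∀ j ≥ J, ∀ z : ℂ,
      ‖Vg (fun w => a * w + b) (f j) z‖ * Real.exp (-psi m z) ≤ ε := by
  intro ε hε
  have hN : 0 ≤ N := le_trans (by positivity) (hbd 0 0)
  have ha0 : 0 ≤ ‖a‖ := norm_nonneg a
  -- derivative of the affine map
  have hderiv : deriv (fun w : ℂ => a * w + b) = fun _ => a := by
    funext w
    have h : HasDerivAt (fun w : ℂ => a * w + b) a w := by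
      simpa using ((hasDerivAt_id w).const_mul a).add_const b
    exact h.deriv
  have hVg : ∀ j z, Vg (fun w => a * w + b) (f j) z
      = (∫ t in (0:ℝ)..1, f j (t * z) * a) * z := by
    intro j z
    simp [Vg, lineInt, hderiv]
  -- continuity facts
  have hcf : ∀ j (z : ℂ), Continuous fun t : ℝ => f j ((t:ℂ) * z) :=
    fun j z => (hdiff j).continuous.comp (by continuity)
  have hcabs : ∀ j (z : ℂ), Continuous fun t : ℝ => ‖f j ((t:ℂ) * z)‖ :=
    fun j z => continuous_norm.comp (hcf j z)
  have hcpsi : ∀ z : ℂ, Continuous fun t : ℝ => Real.exp (psi m ((t:ℂ) * z)) :=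
    fun z => (aux_cont_exp_psi m).comp (by continuity)
  -- basic norm estimate
  have habs : ∀ j z, ‖Vg (fun w => a * w + b) (f j) z‖
      ≤ (∫ t in (0:ℝ)..1, ‖f j ((t:ℂ) * z)‖)
        * (‖a‖ * ‖z‖) := by
    intro j z
    rw [hVg, norm_mul]
    have h1 : ‖∫ t in (0:ℝ)..1, f j ((t:ℂ) * z) * a‖
        ≤ ∫ t in (0:ℝ)..1, ‖f j ((t:ℂ) * z) * a‖ := by
      simpa using
        intervalIntegral.norm_integral_le_integral_norm
          (f := fun t : ℝ => f j ((t:ℂ) * z) * a) (zero_le_one)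
    calc ‖∫ t in (0:ℝ)..1, f j ((t:ℂ) * z) * a‖ * ‖z‖
        ≤ (∫ t in (0:ℝ)..1, ‖f j ((t:ℂ) * z) * a‖) * ‖z‖ :=
          mul_le_mul_of_nonneg_right h1 (norm_nonneg z)
      _ = (∫ t in (0:ℝ)..1, ‖f j ((t:ℂ) * z)‖) * (‖a‖ * ‖z‖) := by
          simp only [norm_mul]
          rw [intervalIntegral.integral_mul_const]; ring
  -- choose R from the tail estimate
  obtain ⟨R₀, hR₀⟩ : ∃ R₀ : ℝ, ∀ r ≥ R₀,
      ‖a‖ * N * (r * (1+r)^m * Real.exp (-(3/8)*r^2) + 2^(m+1) / r) ≤ ε := by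
    have := (aux_G_tendsto m (‖a‖ * N)).eventually_lt_const hε
    rcases Filter.eventually_atTop.mp this with ⟨R₀, hR₀⟩
    exact ⟨R₀, fun r hr => (hR₀ r hr).le⟩
  set R : ℝ := max R₀ 3 with hRdef
  have hR3 : (3:ℝ) ≤ R := le_max_right _ _
  have hR0 : (0:ℝ) < R := by linarith
  -- choose J from uniform convergence on the closed ball of radius R
  set D : ℝ := ‖a‖ * R * (1+R)^m with hDdef
  have hD0 : 0 ≤ D := by positivity
  set δ : ℝ := ε / (D + 1) with hδdef
  have hδ0 : 0 < δ := by positivity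
  have hU := hconv (Metric.closedBall 0 R) (isCompact_closedBall 0 R)
  rcases Filter.eventually_atTop.mp (Metric.tendstoUniformlyOn_iff.mp hU δ hδ0) with ⟨J, hJ⟩
  refine ⟨J, fun j hj z => ?_⟩
  rcases le_or_gt (‖z‖) R with hz | hz
  · -- interior case
    have hsmall : ∀ t ∈ Set.Icc (0:ℝ) 1, ‖f j ((t:ℂ) * z)‖ ≤ δ := by
      intro t ht
      have hmem : (t:ℂ) * z ∈ Metric.closedBall 0 R := by
        rw [Metric.mem_closedBall, dist_zero_right]
        calc ‖(t:ℂ) * z‖ = |t| * ‖z‖ := by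
              rw [norm_mul, Complex.norm_real, Real.norm_eq_abs]
          _ ≤ 1 * R := mul_le_mul (by rw [abs_of_nonneg ht.1]; exact ht.2)
              hz (norm_nonneg z) zero_le_one
          _ = R := one_mul R
      have h := hJ j hj ((t:ℂ) * z) hmem
      rw [Pi.zero_apply, dist_zero_left] at h
      exact h.le
    have hint1 : (∫ t in (0:ℝ)..1, ‖f j ((t:ℂ) * z)‖) ≤ δ := by
      have := intervalIntegral.integral_mono_on (μ := volume) zero_le_one
        ((hcabs j z).intervalIntegrable 0 1) intervalIntegrable_const hsmall
      simpa using this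
    have hVb : ‖Vg (fun w => a * w + b) (f j) z‖ ≤ δ * (‖a‖ * R) := by
      refine (habs j z).trans ?_
      exact mul_le_mul hint1 (mul_le_mul_of_nonneg_left hz ha0) (by positivity) hδ0.le
    have hexp : Real.exp (-psi m z) ≤ (1+R)^m := by
      have hlog : -psi m z ≤ m * Real.log (1+R) := by
        rw [psi]
        have h1 : Real.log (1 + ‖z‖) ≤ Real.log (1+R) :=
          Real.log_le_log (by positivity) (by linarith)
        have h2 : (0:ℝ) ≤ ‖z‖ ^ 2 / 2 := by positivity
        have h3 : (m:ℝ) * Real.log (1 + ‖z‖) ≤ (m:ℝ) * Real.log (1+R) :=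
          mul_le_mul_of_nonneg_left h1 (Nat.cast_nonneg m)
        linarith
      have h := Real.exp_le_exp.2 hlog
      rwa [Real.exp_nat_mul, Real.exp_log (by linarith)] at h
    have hfinal : ‖Vg (fun w => a * w + b) (f j) z‖ * Real.exp (-psi m z)
        ≤ (δ * (‖a‖ * R)) * (1+R)^m :=
      mul_le_mul hVb hexp (Real.exp_pos _).le (by positivity)
    have heq : (δ * (‖a‖ * R)) * (1+R)^m = δ * D := by rw [hDdef]; ring
    rw [heq] at hfinal
    refine hfinal.trans ?_
    rw [hδdef, div_mul_eq_mul_div, div_le_iff₀ (by positivity)]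
    nlinarith
  · -- exterior case
    set r : ℝ := ‖z‖ with hrdef
    have hr0 : 0 < r := lt_of_le_of_lt hR0.le hz
    have habs_t : ∀ t ∈ Set.Icc (0:ℝ) 1, ‖(t:ℂ) * z‖ = t * r := by
      intro t ht
      rw [norm_mul, Complex.norm_real, Real.norm_eq_abs, abs_of_nonneg ht.1]
    -- pointwise domination of f j by the weight
    have hpt : ∀ t ∈ Set.Icc (0:ℝ) 1,
        ‖f j ((t:ℂ) * z)‖ ≤ N * Real.exp (psi m ((t:ℂ) * z)) :=
      fun t _ => aux_weighted_le (hbd j _)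
    -- key pointwise bound on the weight
    set c : ℝ := r^2/2 with hcdef
    have hc0 : 0 < c := by positivity
    set C₁ : ℝ := (1+r)^m * Real.exp (-(3/8)*r^2) with hC₁def
    have hkey : ∀ t ∈ Set.Icc (0:ℝ) 1,
        N * Real.exp (psi m ((t:ℂ) * z)) ≤
          N * Real.exp (psi m z) * (C₁ + 2^m * Real.exp ((t-1)*c)) := by
      intro t ht
      have h1 : Real.exp (psi m ((t:ℂ) * z)) ≤
          Real.exp (psi m z) * (C₁ + 2^m * Real.exp ((t-1)*c)) := by
        rw [aux_exp_psi_eq, aux_exp_psi_eq, habs_t t ht, ← hrdef, hC₁def, hcdef]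
        exact aux_key_pt m ht.1 ht.2 (norm_nonneg z)
      calc N * Real.exp (psi m ((t:ℂ) * z))
          ≤ N * (Real.exp (psi m z) * (C₁ + 2^m * Real.exp ((t-1)*c))) :=
            mul_le_mul_of_nonneg_left h1 hN
        _ = N * Real.exp (psi m z) * (C₁ + 2^m * Real.exp ((t-1)*c)) := by ring
    -- integrate
    have hintf : (∫ t in (0:ℝ)..1, ‖f j ((t:ℂ) * z)‖)
        ≤ ∫ t in (0:ℝ)..1, N * Real.exp (psi m ((t:ℂ) * z)) :=
      intervalIntegral.integral_mono_on zero_le_one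
        ((hcabs j z).intervalIntegrable 0 1)
        ((continuous_const.mul (hcpsi z)).intervalIntegrable 0 1) hpt
    have hcRHS : Continuous fun t : ℝ =>
        N * Real.exp (psi m z) * (C₁ + 2^m * Real.exp ((t-1)*c)) := by
      apply continuous_const.mul
      apply continuous_const.add
      exact continuous_const.mul
        (Real.continuous_exp.comp ((continuous_id.sub continuous_const).mul continuous_const))
    have hint2 : (∫ t in (0:ℝ)..1, N * Real.exp (psi m ((t:ℂ) * z)))
        ≤ ∫ t in (0:ℝ)..1, N * Real.exp (psi m z) * (C₁ + 2^m * Real.exp ((t-1)*c)) :=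
      intervalIntegral.integral_mono_on zero_le_one
        ((continuous_const.mul (hcpsi z)).intervalIntegrable 0 1)
        (hcRHS.intervalIntegrable 0 1) hkey
    have hint3 : (∫ t in (0:ℝ)..1, N * Real.exp (psi m z) * (C₁ + 2^m * Real.exp ((t-1)*c)))
        ≤ N * Real.exp (psi m z) * (C₁ + 2^m * (2 / (2*c))) := by
      have he : ∀ t : ℝ, N * Real.exp (psi m z) * (C₁ + 2^m * Real.exp ((t-1)*c))
          = N * Real.exp (psi m z) * C₁
            + (N * Real.exp (psi m z) * 2^m) * Real.exp ((t-1)*c) := fun t => by ring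
      simp_rw [he]
      have i2 : IntervalIntegrable
          (fun t : ℝ => N * Real.exp (psi m z) * 2^m * Real.exp ((t-1)*c)) volume 0 1 :=
        Continuous.intervalIntegrable (continuous_const.mul (Real.continuous_exp.comp
          ((continuous_id.sub continuous_const).mul continuous_const))) 0 1
      rw [intervalIntegral.integral_add intervalIntegrable_const i2]
      simp only [intervalIntegral.integral_const_mul, intervalIntegral.integral_const,
        smul_eq_mul, sub_zero, one_mul]
      have hseg := aux_int_exp_seg hc0
      have hnn : 0 ≤ N * Real.exp (psi m z) * 2^m := by positivity
      have := mul_le_mul_of_nonneg_left hseg hnn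
      rw [hC₁def]
      nlinarith [this]
    -- assemble
    have hE : Real.exp (psi m z) * Real.exp (-psi m z) = 1 := by
      rw [← Real.exp_add, add_neg_cancel, Real.exp_zero]
    have hchain : ‖Vg (fun w => a * w + b) (f j) z‖
        ≤ N * Real.exp (psi m z) * (C₁ + 2^m * (2 / (2*c))) * (‖a‖ * r) := by
      refine (habs j z).trans ?_
      apply mul_le_mul_of_nonneg_right (hintf.trans (hint2.trans hint3))
      positivity
    have hfin : ‖Vg (fun w => a * w + b) (f j) z‖ * Real.exp (-psi m z)
        ≤ ‖a‖ * N * (r * C₁ + 2^(m+1) / r) := by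
      calc ‖Vg (fun w => a * w + b) (f j) z‖ * Real.exp (-psi m z)
          ≤ N * Real.exp (psi m z) * (C₁ + 2^m * (2 / (2*c))) * (‖a‖ * r)
              * Real.exp (-psi m z) :=
            mul_le_mul_of_nonneg_right hchain (Real.exp_pos _).le
        _ = ‖a‖ * N * ((C₁ + 2^m * (2 / (2*c))) * r)
              * (Real.exp (psi m z) * Real.exp (-psi m z)) := by ring
        _ = ‖a‖ * N * ((C₁ + 2^m * (2 / (2*c))) * r) := by rw [hE, mul_one]
        _ = ‖a‖ * N * (r * C₁ + 2^(m+1) / r) := by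
            rw [hcdef]
            field_simp
            ring
    refine hfin.trans ?_
    have hrR : R₀ ≤ r := le_trans (le_max_left _ _) hz.le
    have := hR₀ r hrR
    rw [hC₁def]
    simpa [mul_assoc] using this
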